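/- Let n ≥ 3 be a natural number, σ a derangement of Fin n, and λ > 0 a real number. Let A and B be n×n real matrices with nonnegative entries such that A i j = 0 whenever j ≠ σ(i), and B i j = 0 whenever i = j or j = σ(i). If ‖A‖ + ‖B‖/2 = λ·n, then (n−1) · max_{i,j} (A + B) i j ≥ (2 − 2/n)·λ. (Theorem 1, lower bound for the rr-sys DCT on a scaled derangement permutation demand matrix: A records traffic sent directly on the permutation's edges, B records the per-edge load of traffic sent over two hops, so each indirectly sent unit contributes twice to B; the completion time is at least (n−1) times the maximal per-edge load.) -/

import Mathlib

open Matrix BigOperators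

/-- Theorem 1 (lower bound for the rr-sys system DCT on a scaled derangement
permutation demand matrix): if `A` is the direct one-hop traffic (supported on
the pairs `(i, σ i)`), `B` the per-edge load of two-hop traffic (supported off
the diagonal and off the permutation), and completeness forces
`‖A‖ + ‖B‖/2 = λ·n`, then the completion time, which is at least `(n-1)` times
the maximal per-edge load of `A + B`, is at least `(2 - 2/n)·λ`. -/
theorem rr_sys_dct_lower_bound_perm (n : ℕ) (hn : 3 ≤ n)
    (σ : Equiv.Perm (Fin n)) (hσ : ∀ i, σ i ≠ i)
    (lam : ℝ) (hlam : 0 < lam)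
    (A B : Matrix (Fin n) (Fin n) ℝ)
    (hA : ∀ i j, 0 ≤ A i j) (hB : ∀ i j, 0 ≤ B i j)
    (hAsupp : ∀ i j, j ≠ σ i → A i j = 0)
    (hBsupp : ∀ i j, i = j ∨ j = σ i → B i j = 0)
    (hweight : (∑ i, ∑ j, A i j) + (∑ i, ∑ j, B i j) / 2 = lam * n) :
    (2 - 2 / (n : ℝ)) * lam ≤ ((n : ℝ) - 1) * (⨆ i, ⨆ j, (A + B) i j) := by
  have hnpos : (0:ℝ) < n := by
    have : (3:ℝ) ≤ n := by exact_mod_cast hn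
    linarith
  haveI : NeZero n := ⟨by omega⟩
  set M := ⨆ i, ⨆ j, (A + B) i j with hM
  have hbd : ∀ i j, (A + B) i j ≤ M := by
    intro i j
    have h1 : (A + B) i j ≤ ⨆ j, (A + B) i j :=
      le_ciSup (Set.Finite.bddAbove (Set.finite_range _)) j
    exact h1.trans (le_ciSup (Set.Finite.bddAbove
      (Set.finite_range (fun i => ⨆ j, (A + B) i j))) i)
  have hAle : ∀ i j, A i j ≤ M := by
    intro i j
    have := hbd i j
    have := hB i j
    simp only [Matrix.add_apply] at *
    linarith
  have hBle : ∀ i j, B i j ≤ M := by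
    intro i j
    have := hbd i j
    have := hA i j
    simp only [Matrix.add_apply] at *
    linarith
  have hM0 : 0 ≤ M := le_trans (hA 0 0) (hAle 0 0)
  -- bound on ∑ A
  have hAsum : (∑ i, ∑ j, A i j) ≤ (n:ℝ) * M := by
    have hrow : ∀ i : Fin n, ∑ j, A i j ≤ M := by
      intro i
      have : ∑ j, A i j = A i (σ i) := by
        apply Finset.sum_eq_single
        · intro b _ hb; exact hAsupp i b hb
        · intro h; simp at h
      rw [this]; exact hAle i (σ i)
    calc (∑ i, ∑ j, A i j) ≤ ∑ i : Fin n, M := Finset.sum_le_sum (fun i _ => hrow i)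
      _ = (n:ℝ) * M := by simp [mul_comm]
  -- bound on ∑ B
  have hBsum : (∑ i, ∑ j, B i j) ≤ (n:ℝ) * (((n:ℝ) - 2) * M) := by
    have hrow : ∀ i : Fin n, ∑ j, B i j ≤ ((n:ℝ) - 2) * M := by
      intro i
      have hs : ∑ j, B i j = ∑ j ∈ Finset.univ \ {i, σ i}, B i j := by
        symm
        apply Finset.sum_subset (Finset.subset_univ _)
        intro x _ hx
        have hx' : x = i ∨ x = σ i := by
          by_contra hcon
          push_neg at hcon
          exact hx (by simp [hcon.1, hcon.2])
        exact hBsupp i x (hx'.imp Eq.symm id)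
      rw [hs]
      have hcard : (Finset.univ \ ({i, σ i} : Finset (Fin n))).card = n - 2 := by
        rw [Finset.card_sdiff_of_subset (Finset.subset_univ _)]
        simp [Finset.card_insert_of_notMem, (hσ i).symm]
      have := Finset.sum_le_card_nsmul (Finset.univ \ ({i, σ i} : Finset (Fin n)))
        (fun j => B i j) M (fun j _ => hBle i j)
      rw [hcard] at this
      refine this.trans ?_
      have h2n : 2 ≤ n := by omega
      rw [nsmul_eq_mul]
      apply mul_le_mul_of_nonneg_right _ hM0
      push_cast [Nat.cast_sub h2n]
      linarith
    calc (∑ i, ∑ j, B i j) ≤ ∑ i : Fin n, ((n:ℝ) - 2) * M :=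
        Finset.sum_le_sum (fun i _ => hrow i)
      _ = (n:ℝ) * (((n:ℝ) - 2) * M) := by simp [mul_comm]
  have key : 2 * lam ≤ (n:ℝ) * M := by
    have h1 : lam * n ≤ (n:ℝ) * M + ((n:ℝ) * (((n:ℝ) - 2) * M)) / 2 := by
      rw [← hweight]; linarith
    have h2 : lam * n ≤ (n:ℝ) * ((n:ℝ) * M) / 2 := by nlinarith
    nlinarith
  have hfrac : (0:ℝ) ≤ ((n:ℝ) - 1) / n := by
    have h3 : (3:ℝ) ≤ n := by exact_mod_cast hn
    apply div_nonneg _ hnpos.le; linarith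
  have e1 : (2 - 2 / (n:ℝ)) * lam = (2 * lam) * (((n:ℝ) - 1) / n) := by
    field_simp
  have e2 : ((n:ℝ) - 1) * M = ((n:ℝ) * M) * (((n:ℝ) - 1) / n) := by
    field_simp
  rw [e1, e2]
  exact mul_le_mul_of_nonneg_right key hfrac
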